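/- Let B_{m,n}(x) = 2^{-mn-m(m-1)/2} (x+n+1)_m (x+n+2)_m · [(x+2)(x+3)^2···(x+n-1)^2(x+n)] · [(x+3/2)(x+5/2)^2···(x+(2n-1)/2)^2(x+(2n+1)/2)] · ∏_{i=1}^n (x+i)_m/(x+i+1/2)_m · ∏_{i=1}^m (2x+n+i+2)_{n+i-1}. Then for m ≥ 0 and n ≥ 1, B_{m,n}(x)/B_{m,n-1}(x) = 2^{-(m+n)} (2x+m+n+2)_{m+n} · ∏_{i=0}^{m-1} (x+m+n-i+1)/(x+m+n-i+1/2), as an identity of rational functions in x. -/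

import Mathlib

/-- The rising factorial `(a)_j = a(a+1)···(a+j-1)`. -/
noncomputable def rfac {K : Type*} [Field K] (a : K) (j : ℕ) : K :=
  ∏ i ∈ Finset.range j, (a + i)

/-- The product `(x+2)(x+3)^2···(x+n-1)^2(x+n)`, whose bases grow by one from
factor to factor while the exponents increase by one up to the middle and then
decrease by one (empty for `n ≤ 1`). -/
noncomputable def tentInt {K : Type*} [Field K] (x : K) (n : ℕ) : K :=
  ∏ j ∈ Finset.Icc 2 n, (x + j) ^ (min (j - 1) (n + 1 - j))

/-- The product `(x+3/2)(x+5/2)^2···(x+(2n-1)/2)^2(x+(2n+1)/2)`, bases growing by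
one, exponents rising by one to the middle and then falling (empty for `n = 0`). -/
noncomputable def tentHalf {K : Type*} [Field K] (x : K) (n : ℕ) : K :=
  ∏ j ∈ Finset.Icc 1 n, (x + j + 1 / 2) ^ (min j (n + 1 - j))

/-- The product `(x+1)(x+2)^2···(x+m-1)^2(x+m)`, bases growing by one, exponents
rising by one to the middle and then falling (empty for `m = 0`). -/
noncomputable def tentIntBar {K : Type*} [Field K] (x : K) (m : ℕ) : K :=
  ∏ j ∈ Finset.Icc 1 m, (x + j) ^ (min j (m + 1 - j))

/-- The product `(x+3/2)(x+5/2)^2···(x+(2m-3)/2)^2(x+(2m-1)/2)`, bases growing by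
one, exponents rising by one to the middle and then falling (empty for `m ≤ 1`). -/
noncomputable def tentHalfBar {K : Type*} [Field K] (x : K) (m : ℕ) : K :=
  ∏ j ∈ Finset.Icc 1 (m - 1), (x + j + 1 / 2) ^ (min j (m - j))

/-- The polynomial `B_{m,n}(x)` of formula (1.1). -/
noncomputable def Bpoly {K : Type*} [Field K] (m n : ℕ) (x : K) : K :=
  ((2 : K) ^ (m * n + m * (m - 1) / 2))⁻¹ *
    rfac (x + n + 1) m * rfac (x + n + 2) m *
    tentInt x n * tentHalf x n *
    (∏ i ∈ Finset.Icc 1 n, rfac (x + i) m / rfac (x + i + 1 / 2) m) *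
    (∏ i ∈ Finset.Icc 1 m, rfac (2 * x + n + i + 2) (n + i - 1))

/-- The polynomial `B̄_{m,n}(x)` of formula (1.2). -/
noncomputable def Bbar {K : Type*} [Field K] (m n : ℕ) (x : K) : K :=
  ((2 : K) ^ (m * n + n * (n + 1) / 2))⁻¹ *
    rfac (x + m + 1) n *
    tentIntBar x m * tentHalfBar x m *
    (∏ i ∈ Finset.Icc 1 m, rfac (x + i) n / rfac (x + i + 1 / 2) n) *
    (∏ i ∈ Finset.Icc 1 n, rfac (2 * x + m + i + 1) (m + i))

namespace BAux
open Finset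

instance : CharZero (RatFunc ℚ) :=
  charZero_of_injective_ringHom
    (f := (algebraMap (Polynomial ℚ) (RatFunc ℚ)).comp Polynomial.C) (by
      intro a b h
      simp only [RingHom.coe_comp, Function.comp_apply] at h
      exact Polynomial.C_injective (RatFunc.algebraMap_injective ℚ h))

noncomputable def Lf (c : ℕ) : RatFunc ℚ := 2 * RatFunc.X + (c : RatFunc ℚ)

lemma ratCast_eq (q : ℚ) :
    (q : RatFunc ℚ) = algebraMap (Polynomial ℚ) (RatFunc ℚ) (Polynomial.C q) := by
  have : ((algebraMap (Polynomial ℚ) (RatFunc ℚ)).comp (Polynomial.C)) q = (q : RatFunc ℚ) :=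
    eq_ratCast _ q
  simpa using this.symm

lemma X_add_ne (q : ℚ) : (RatFunc.X + (q : RatFunc ℚ)) ≠ 0 := by
  rw [ratCast_eq, ← RatFunc.algebraMap_X, ← map_add]
  exact RatFunc.algebraMap_ne_zero (Polynomial.X_add_C_ne_zero q)

lemma twoX_add_ne (q : ℚ) : (2 * RatFunc.X + (q : RatFunc ℚ)) ≠ 0 := by
  rw [ratCast_eq, ← RatFunc.algebraMap_X,
    show (2 : RatFunc ℚ) = algebraMap (Polynomial ℚ) (RatFunc ℚ) 2 from (map_ofNat _ 2).symm,
    ← map_mul, ← map_add]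
  apply RatFunc.algebraMap_ne_zero
  intro h
  have := congrArg (fun p => Polynomial.coeff p 1) h
  simp at this

lemma nzX (y : RatFunc ℚ) (q : ℚ) (h : y = RatFunc.X + (q : RatFunc ℚ)) : y ≠ 0 := h ▸ X_add_ne q
lemma nz2X (y : RatFunc ℚ) (q : ℚ) (h : y = 2 * RatFunc.X + (q : RatFunc ℚ)) : y ≠ 0 :=
  h ▸ twoX_add_ne q
lemma Lf_ne (c : ℕ) : Lf c ≠ 0 := nz2X _ c (by simp [Lf])

lemma rfac_ne_zero (a : RatFunc ℚ) (q : ℚ) (h : a = RatFunc.X + (q : RatFunc ℚ)) (j : ℕ) :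
    rfac a j ≠ 0 := by
  apply Finset.prod_ne_zero_iff.2
  intro i _
  exact nzX _ (q + i) (by rw [h]; push_cast; ring)

lemma rfac2_ne_zero (a : RatFunc ℚ) (q : ℚ) (h : a = 2 * RatFunc.X + (q : RatFunc ℚ)) (j : ℕ) :
    rfac a j ≠ 0 := by
  apply Finset.prod_ne_zero_iff.2
  intro i _
  exact nz2X _ (q + i) (by rw [h]; push_cast; ring)

lemma Bpoly_ne_zero (m n : ℕ) : Bpoly m n (RatFunc.X : RatFunc ℚ) ≠ 0 := by
  unfold Bpoly
  apply mul_ne_zero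
  apply mul_ne_zero
  apply mul_ne_zero
  apply mul_ne_zero
  apply mul_ne_zero
  apply mul_ne_zero
  · exact inv_ne_zero (pow_ne_zero _ two_ne_zero)
  · exact rfac_ne_zero _ (n + 1) (by push_cast; ring) m
  · exact rfac_ne_zero _ (n + 2) (by push_cast; ring) m
  · exact Finset.prod_ne_zero_iff.2 fun j _ =>
      pow_ne_zero _ (nzX _ j (by push_cast; ring))
  · exact Finset.prod_ne_zero_iff.2 fun j _ =>
      pow_ne_zero _ (nzX _ (j + 1/2) (by push_cast; ring))
  · exact Finset.prod_ne_zero_iff.2 fun i _ =>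
      div_ne_zero (rfac_ne_zero _ i (by push_cast; ring) m)
        (rfac_ne_zero _ (i + 1/2) (by push_cast; ring) m)
  · exact Finset.prod_ne_zero_iff.2 fun i _ =>
      rfac2_ne_zero _ (n + i + 2) (by push_cast; ring) _

lemma ev1r (M β c : ℕ) :
    (∑ i ∈ range M, if c = i + β then 1 else 0) =
      if β ≤ c ∧ c < M + β then 1 else 0 := by
  induction M with
  | zero => rw [Finset.range_zero, Finset.sum_empty]; split_ifs <;> omega
  | succ M ih => rw [Finset.sum_range_succ, ih]; split_ifs <;> omega

lemma ev2r (M β c : ℕ) :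
    (∑ i ∈ range M, if c = 2 * i + β then 1 else 0) =
      if β ≤ c ∧ c < 2 * M + β ∧ c % 2 = β % 2 then 1 else 0 := by
  induction M with
  | zero => rw [Finset.range_zero, Finset.sum_empty]; split_ifs <;> omega
  | succ M ih => rw [Finset.sum_range_succ, ih]; split_ifs <;> omega

lemma ev1I (a b β c : ℕ) :
    (∑ j ∈ Finset.Icc a b, if c = j + β then 1 else 0) =
      if a + β ≤ c ∧ c ≤ b + β then 1 else 0 := by
  induction b with
  | zero =>
    rcases Nat.eq_zero_or_pos a with rfl | ha
    · rw [Finset.Icc_self, Finset.sum_singleton]; split_ifs <;> omega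
    · rw [Finset.Icc_eq_empty (by omega), Finset.sum_empty]; split_ifs <;> omega
  | succ b ih =>
    by_cases hab : a ≤ b + 1
    · rw [Finset.sum_Icc_succ_top hab, ih]; split_ifs <;> omega
    · rw [Finset.Icc_eq_empty (by omega), Finset.sum_empty]; split_ifs <;> omega

lemma ev2I (a b β c : ℕ) :
    (∑ j ∈ Finset.Icc a b, if c = 2 * j + β then 1 else 0) =
      if 2 * a + β ≤ c ∧ c ≤ 2 * b + β ∧ c % 2 = β % 2 then 1 else 0 := by
  induction b with
  | zero =>
    rcases Nat.eq_zero_or_pos a with rfl | ha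
    · rw [Finset.Icc_self, Finset.sum_singleton]; split_ifs <;> omega
    · rw [Finset.Icc_eq_empty (by omega), Finset.sum_empty]; split_ifs <;> omega
  | succ b ih =>
    by_cases hab : a ≤ b + 1
    · rw [Finset.sum_Icc_succ_top hab, ih]; split_ifs <;> omega
    · rw [Finset.Icc_eq_empty (by omega), Finset.sum_empty]; split_ifs <;> omega

lemma ev2I0 (a b c : ℕ) :
    (∑ j ∈ Finset.Icc a b, if c = 2 * j then 1 else 0) =
      if 2 * a ≤ c ∧ c ≤ 2 * b ∧ c % 2 = 0 then 1 else 0 := by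
  have h : ∀ j, c = 2 * j ↔ c = 2 * j + 0 := by omega
  simp only [h]
  rw [ev2I]
  split_ifs <;> omega

lemma Lconv {ι : Type*} (s : Finset ι) (φ : ι → ℕ) (N : ℕ) (h : ∀ j ∈ s, φ j < N) :
    ∏ j ∈ s, Lf (φ j) =
      ∏ c ∈ range N, Lf c ^ (∑ j ∈ s, if c = φ j then 1 else 0) := by
  calc ∏ j ∈ s, Lf (φ j)
      = ∏ j ∈ s, ∏ c ∈ range N, (if c = φ j then Lf c else 1) := by
        refine Finset.prod_congr rfl fun j hj => ?_
        rw [Finset.prod_ite_eq' (range N) (φ j) (fun c => Lf c),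
          if_pos (mem_range.2 (h j hj))]
    _ = ∏ c ∈ range N, ∏ j ∈ s, (if c = φ j then Lf c else 1) := Finset.prod_comm
    _ = ∏ c ∈ range N, Lf c ^ (∑ j ∈ s, if c = φ j then 1 else 0) := by
        refine Finset.prod_congr rfl fun c _ => ?_
        rw [← Finset.prod_pow_eq_pow_sum]
        refine Finset.prod_congr rfl fun j _ => ?_
        split_ifs <;> simp

lemma conv_count {ι : Type*} (s : Finset ι) (g : ι → RatFunc ℚ) (φ : ι → ℕ)
    (h : ∀ j ∈ s, Lf (φ j) = 2 * g j) :
    (2 : RatFunc ℚ) ^ s.card * ∏ j ∈ s, g j = ∏ j ∈ s, Lf (φ j) := by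
  rw [Finset.prod_congr rfl h, Finset.prod_mul_distrib, Finset.prod_const]

set_option maxHeartbeats 2000000 in
lemma keyF' (m k : ℕ) :
    (∏ j ∈ Finset.Icc ((k + 4) / 2) (k + 1), Lf (2 * j)) *
        ((∏ j ∈ Finset.Icc ((k + 3) / 2) (k + 1), Lf (2 * j + 1)) *
          ((∏ i ∈ Finset.Icc 1 m, (Lf (2 * i + (2 * k + 1)) * Lf (2 * i + (2 * k + 2)))) *
            (∏ i ∈ range m, Lf (2 * i + (2 * k + 5))))) =
      (∏ i ∈ range (m + k + 1), Lf (i + (m + k + 3))) *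
        ((∏ i ∈ range m, Lf (2 * i + (2 * k + 3))) *
          (∏ i ∈ Finset.Icc 1 m, Lf (i + (k + 2)))) := by
  rw [Finset.prod_mul_distrib]
  rw [Lconv (Finset.Icc ((k + 4) / 2) (k + 1)) (fun j => 2 * j) (2 * m + 2 * k + 6)
      (fun j hj => by simp only [mem_Icc] at hj; beta_reduce; omega),
    Lconv (Finset.Icc ((k + 3) / 2) (k + 1)) (fun j => 2 * j + 1) (2 * m + 2 * k + 6)
      (fun j hj => by simp only [mem_Icc] at hj; beta_reduce; omega),
    Lconv (Finset.Icc 1 m) (fun i => 2 * i + (2 * k + 1)) (2 * m + 2 * k + 6)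
      (fun j hj => by simp only [mem_Icc] at hj; beta_reduce; omega),
    Lconv (Finset.Icc 1 m) (fun i => 2 * i + (2 * k + 2)) (2 * m + 2 * k + 6)
      (fun j hj => by simp only [mem_Icc] at hj; beta_reduce; omega),
    Lconv (range m) (fun i => 2 * i + (2 * k + 5)) (2 * m + 2 * k + 6)
      (fun j hj => by simp only [mem_range] at hj; beta_reduce; omega),
    Lconv (range (m + k + 1)) (fun i => i + (m + k + 3)) (2 * m + 2 * k + 6)
      (fun j hj => by simp only [mem_range] at hj; beta_reduce; omega),
    Lconv (range m) (fun i => 2 * i + (2 * k + 3)) (2 * m + 2 * k + 6)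
      (fun j hj => by simp only [mem_range] at hj; beta_reduce; omega),
    Lconv (Finset.Icc 1 m) (fun i => i + (k + 2)) (2 * m + 2 * k + 6)
      (fun j hj => by simp only [mem_Icc] at hj; beta_reduce; omega)]
  simp only [← Finset.prod_mul_distrib, ← pow_add]
  refine Finset.prod_congr rfl fun c hc => ?_
  congr 1
  simp only [ev2I0, ev2I, ev2r, ev1r, ev1I]
  split_ifs <;> omega


lemma rfac_succ {K : Type*} [Field K] (a : K) (j : ℕ) :
    rfac a (j + 1) = rfac a j * (a + j) := Finset.prod_range_succ _ _

lemma rfac_succ' {K : Type*} [Field K] (a : K) (j : ℕ) :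
    rfac a (j + 1) = a * rfac (a + 1) j := by
  unfold rfac
  rw [Finset.prod_range_succ']
  have h0 : (a + ((0 : ℕ) : K)) = a := by norm_num
  rw [h0, mul_comm]
  congr 1
  refine Finset.prod_congr rfl fun i _ => ?_
  push_cast
  ring

lemma HW (a : RatFunc ℚ) (j : ℕ) :
    a * rfac (a + 1) (j + 1) = rfac a j * (a + j) * (a + (j + 1 : ℕ)) := by
  have h1 := rfac_succ' a (j + 1)
  have h2 : rfac a (j + 1 + 1) = rfac a j * (a + j) * (a + (j + 1 : ℕ)) := by
    rw [rfac_succ a (j + 1), rfac_succ a j]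
  rw [← h1, h2]

lemma tentInt_step (k : ℕ) :
    tentInt (RatFunc.X : RatFunc ℚ) (k + 1) =
      tentInt (RatFunc.X : RatFunc ℚ) k *
        ∏ j ∈ Finset.Icc ((k + 4) / 2) (k + 1), ((RatFunc.X : RatFunc ℚ) + j) := by
  unfold tentInt
  have h1 : ∀ j ∈ Finset.Icc 2 (k + 1),
      ((RatFunc.X : RatFunc ℚ) + j) ^ (min (j - 1) (k + 1 + 1 - j)) =
        ((RatFunc.X : RatFunc ℚ) + j) ^ (min (j - 1) (k + 1 - j)) *
          ((RatFunc.X : RatFunc ℚ) + j) ^ (if (k + 4) / 2 ≤ j then 1 else 0) := by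
    intro j hj
    rw [← pow_add]
    congr 1
    simp only [mem_Icc] at hj
    split_ifs <;> omega
  rw [Finset.prod_congr rfl h1, Finset.prod_mul_distrib]
  congr 1
  · refine (Finset.prod_subset (Finset.Icc_subset_Icc_right (by omega)) ?_).symm
    intro j hj hnj
    simp only [mem_Icc] at hj hnj
    have : min (j - 1) (k + 1 - j) = 0 := by omega
    rw [this, pow_zero]
  · have h2 : ∀ j ∈ Finset.Icc 2 (k + 1),
        ((RatFunc.X : RatFunc ℚ) + j) ^ (if (k + 4) / 2 ≤ j then 1 else 0) =
          if (k + 4) / 2 ≤ j then ((RatFunc.X : RatFunc ℚ) + j) else 1 := by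
      intro j _
      split_ifs <;> simp
    rw [Finset.prod_congr rfl h2, ← Finset.prod_filter]
    congr 1
    ext j
    simp only [mem_filter, mem_Icc]
    omega

lemma tentHalf_step (k : ℕ) :
    tentHalf (RatFunc.X : RatFunc ℚ) (k + 1) =
      tentHalf (RatFunc.X : RatFunc ℚ) k *
        ∏ j ∈ Finset.Icc ((k + 3) / 2) (k + 1), ((RatFunc.X : RatFunc ℚ) + j + 1 / 2) := by
  unfold tentHalf
  have h1 : ∀ j ∈ Finset.Icc 1 (k + 1),
      ((RatFunc.X : RatFunc ℚ) + j + 1 / 2) ^ (min j (k + 1 + 1 - j)) =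
        ((RatFunc.X : RatFunc ℚ) + j + 1 / 2) ^ (min j (k + 1 - j)) *
          ((RatFunc.X : RatFunc ℚ) + j + 1 / 2) ^ (if (k + 3) / 2 ≤ j then 1 else 0) := by
    intro j hj
    rw [← pow_add]
    congr 1
    simp only [mem_Icc] at hj
    split_ifs <;> omega
  rw [Finset.prod_congr rfl h1, Finset.prod_mul_distrib]
  congr 1
  · refine (Finset.prod_subset (Finset.Icc_subset_Icc_right (by omega)) ?_).symm
    intro j hj hnj
    simp only [mem_Icc] at hj hnj
    have : min j (k + 1 - j) = 0 := by omega
    rw [this, pow_zero]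
  · have h2 : ∀ j ∈ Finset.Icc 1 (k + 1),
        ((RatFunc.X : RatFunc ℚ) + j + 1 / 2) ^ (if (k + 3) / 2 ≤ j then 1 else 0) =
          if (k + 3) / 2 ≤ j then ((RatFunc.X : RatFunc ℚ) + j + 1 / 2) else 1 := by
      intro j _
      split_ifs <;> simp
    rw [Finset.prod_congr rfl h2, ← Finset.prod_filter]
    congr 1
    ext j
    simp only [mem_filter, mem_Icc]
    omega


lemma W_step (m k : ℕ) :
    (∏ i ∈ Finset.Icc 1 m, rfac (2 * (RatFunc.X : RatFunc ℚ) + k + i + 3) (k + i)) *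
        (∏ i ∈ Finset.Icc 1 m, Lf (i + (k + 2))) =
      (∏ i ∈ Finset.Icc 1 m, rfac (2 * (RatFunc.X : RatFunc ℚ) + k + i + 2) (k + i - 1)) *
        (∏ i ∈ Finset.Icc 1 m, (Lf (2 * i + (2 * k + 1)) * Lf (2 * i + (2 * k + 2)))) := by
  rw [← Finset.prod_mul_distrib, ← Finset.prod_mul_distrib]
  refine Finset.prod_congr rfl fun i hi => ?_
  simp only [mem_Icc] at hi
  obtain ⟨i', rfl⟩ : ∃ i', i = i' + 1 := ⟨i - 1, by omega⟩
  have e1 : (k + (i' + 1)) = (k + i') + 1 := by omega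
  have e3 : (2 * (RatFunc.X : RatFunc ℚ) + k + ((i' + 1 : ℕ) : RatFunc ℚ) + 3) =
      (2 * (RatFunc.X : RatFunc ℚ) + k + ((i' + 1 : ℕ) : RatFunc ℚ) + 2) + 1 := by ring
  have e4 : Lf ((i' + 1) + (k + 2)) =
      2 * (RatFunc.X : RatFunc ℚ) + k + ((i' + 1 : ℕ) : RatFunc ℚ) + 2 := by
    unfold Lf; push_cast; ring
  have hHW := HW (2 * (RatFunc.X : RatFunc ℚ) + k + ((i' + 1 : ℕ) : RatFunc ℚ) + 2) (k + i')
  have e5 : (2 * (RatFunc.X : RatFunc ℚ) + k + ((i' + 1 : ℕ) : RatFunc ℚ) + 2) +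
      ((k + i' : ℕ) : RatFunc ℚ) = Lf (2 * (i' + 1) + (2 * k + 1)) := by
    unfold Lf; push_cast; ring
  have e6 : (2 * (RatFunc.X : RatFunc ℚ) + k + ((i' + 1 : ℕ) : RatFunc ℚ) + 2) +
      ((k + i' + 1 : ℕ) : RatFunc ℚ) = Lf (2 * (i' + 1) + (2 * k + 2)) := by
    unfold Lf; push_cast; ring
  rw [e1, Nat.add_sub_cancel, e3, e4]
  rw [e5, e6] at hHW
  rw [mul_comm, hHW]
  ring


set_option maxHeartbeats 1000000 in
lemma Fmain (m k : ℕ) :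
    (2 : RatFunc ℚ) ^ (k + 1) *
        (∏ j ∈ Finset.Icc ((k + 4) / 2) (k + 1), ((RatFunc.X : RatFunc ℚ) + j)) *
        (∏ j ∈ Finset.Icc ((k + 3) / 2) (k + 1), ((RatFunc.X : RatFunc ℚ) + j + 1 / 2)) *
        (∏ i ∈ Finset.Icc 1 m, (Lf (2 * i + (2 * k + 1)) * Lf (2 * i + (2 * k + 2)))) *
        (∏ i ∈ range m, ((RatFunc.X : RatFunc ℚ) + k + i + 2 + 1 / 2)) =
      rfac (2 * (RatFunc.X : RatFunc ℚ) + m + k + 3) (m + k + 1) *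
        rfac ((RatFunc.X : RatFunc ℚ) + k + 1 + 1 / 2) m *
        (∏ i ∈ Finset.Icc 1 m, Lf (i + (k + 2))) := by
  have cTi := conv_count (Finset.Icc ((k + 4) / 2) (k + 1))
    (fun j => (RatFunc.X : RatFunc ℚ) + j) (fun j => 2 * j)
    (fun j _ => by unfold Lf; push_cast; ring)
  have cTh := conv_count (Finset.Icc ((k + 3) / 2) (k + 1))
    (fun j => (RatFunc.X : RatFunc ℚ) + j + 1 / 2) (fun j => 2 * j + 1)
    (fun j _ => by unfold Lf; push_cast; ring)
  have cDv := conv_count (range m)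
    (fun i => (RatFunc.X : RatFunc ℚ) + k + i + 2 + 1 / 2) (fun i => 2 * i + (2 * k + 5))
    (fun i _ => by unfold Lf; push_cast; ring)
  have cD1 := conv_count (range m)
    (fun i => (RatFunc.X : RatFunc ℚ) + k + 1 + 1 / 2 + i) (fun i => 2 * i + (2 * k + 3))
    (fun i _ => by unfold Lf; push_cast; ring)
  have cG : rfac (2 * (RatFunc.X : RatFunc ℚ) + m + k + 3) (m + k + 1) =
      ∏ i ∈ range (m + k + 1), Lf (i + (m + k + 3)) := by
    unfold rfac
    refine Finset.prod_congr rfl fun i _ => ?_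
    unfold Lf; push_cast; ring
  have cD1' : rfac ((RatFunc.X : RatFunc ℚ) + k + 1 + 1 / 2) m =
      ∏ i ∈ range m, ((RatFunc.X : RatFunc ℚ) + k + 1 + 1 / 2 + i) := rfl
  rw [Finset.card_range] at cDv cD1
  apply mul_left_cancel₀ (a := (2 : RatFunc ℚ) ^ m) (pow_ne_zero _ two_ne_zero)
  have h2 : (2 : RatFunc ℚ) ^ (k + 1) =
      2 ^ ((Finset.Icc ((k + 4) / 2) (k + 1)).card) *
        2 ^ ((Finset.Icc ((k + 3) / 2) (k + 1)).card) := by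
    rw [← pow_add]
    congr 1
    rw [Nat.card_Icc, Nat.card_Icc]
    omega
  calc (2 : RatFunc ℚ) ^ m *
      ((2 : RatFunc ℚ) ^ (k + 1) *
        (∏ j ∈ Finset.Icc ((k + 4) / 2) (k + 1), ((RatFunc.X : RatFunc ℚ) + j)) *
        (∏ j ∈ Finset.Icc ((k + 3) / 2) (k + 1), ((RatFunc.X : RatFunc ℚ) + j + 1 / 2)) *
        (∏ i ∈ Finset.Icc 1 m, (Lf (2 * i + (2 * k + 1)) * Lf (2 * i + (2 * k + 2)))) *
        (∏ i ∈ range m, ((RatFunc.X : RatFunc ℚ) + k + i + 2 + 1 / 2)))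
      = (2 ^ ((Finset.Icc ((k + 4) / 2) (k + 1)).card) *
          ∏ j ∈ Finset.Icc ((k + 4) / 2) (k + 1), ((RatFunc.X : RatFunc ℚ) + j)) *
        ((2 ^ ((Finset.Icc ((k + 3) / 2) (k + 1)).card) *
          ∏ j ∈ Finset.Icc ((k + 3) / 2) (k + 1), ((RatFunc.X : RatFunc ℚ) + j + 1 / 2)) *
        ((∏ i ∈ Finset.Icc 1 m, (Lf (2 * i + (2 * k + 1)) * Lf (2 * i + (2 * k + 2)))) *
          (2 ^ m * ∏ i ∈ range m, ((RatFunc.X : RatFunc ℚ) + k + i + 2 + 1 / 2)))) := by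
        rw [h2]; ring
    _ = (∏ j ∈ Finset.Icc ((k + 4) / 2) (k + 1), Lf (2 * j)) *
        ((∏ j ∈ Finset.Icc ((k + 3) / 2) (k + 1), Lf (2 * j + 1)) *
          ((∏ i ∈ Finset.Icc 1 m, (Lf (2 * i + (2 * k + 1)) * Lf (2 * i + (2 * k + 2)))) *
            (∏ i ∈ range m, Lf (2 * i + (2 * k + 5))))) := by
        rw [cTi, cTh, cDv]
    _ = (∏ i ∈ range (m + k + 1), Lf (i + (m + k + 3))) *
        ((∏ i ∈ range m, Lf (2 * i + (2 * k + 3))) *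
          (∏ i ∈ Finset.Icc 1 m, Lf (i + (k + 2)))) := keyF' m k
    _ = (2 : RatFunc ℚ) ^ m *
        (rfac (2 * (RatFunc.X : RatFunc ℚ) + m + k + 3) (m + k + 1) *
          rfac ((RatFunc.X : RatFunc ℚ) + k + 1 + 1 / 2) m *
          (∏ i ∈ Finset.Icc 1 m, Lf (i + (k + 2)))) := by
        rw [← cG, ← cD1, cD1']
        ring

set_option maxHeartbeats 1000000 in
lemma hRlem (m k : ℕ) :
    ((2 : RatFunc ℚ) ^ (m + (k + 1)))⁻¹ *
        rfac (2 * (RatFunc.X : RatFunc ℚ) + m + ((k + 1 : ℕ) : RatFunc ℚ) + 2) (m + (k + 1)) *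
        (∏ i ∈ Finset.range m,
          (((RatFunc.X : RatFunc ℚ) + m + ((k + 1 : ℕ) : RatFunc ℚ) - i + 1) /
            ((RatFunc.X : RatFunc ℚ) + m + ((k + 1 : ℕ) : RatFunc ℚ) - i + 1 / 2))) =
      ((2 : RatFunc ℚ) ^ m)⁻¹ * rfac ((RatFunc.X : RatFunc ℚ) + k + 3) m *
        (∏ j ∈ Finset.Icc ((k + 4) / 2) (k + 1), ((RatFunc.X : RatFunc ℚ) + j)) *
        (∏ j ∈ Finset.Icc ((k + 3) / 2) (k + 1), ((RatFunc.X : RatFunc ℚ) + j + 1 / 2)) *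
        ((∏ i ∈ Finset.Icc 1 m, (Lf (2 * i + (2 * k + 1)) * Lf (2 * i + (2 * k + 2)))) /
          (rfac ((RatFunc.X : RatFunc ℚ) + k + 1 + 1 / 2) m *
            ∏ i ∈ Finset.Icc 1 m, Lf (i + (k + 2)))) := by
  have hGnorm : rfac (2 * (RatFunc.X : RatFunc ℚ) + m + ((k + 1 : ℕ) : RatFunc ℚ) + 2)
      (m + (k + 1)) = rfac (2 * (RatFunc.X : RatFunc ℚ) + m + k + 3) (m + k + 1) := by
    rw [show (2 * (RatFunc.X : RatFunc ℚ) + m + ((k + 1 : ℕ) : RatFunc ℚ) + 2) =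
      2 * (RatFunc.X : RatFunc ℚ) + m + k + 3 by push_cast; ring,
      show m + (k + 1) = m + k + 1 by omega]
  have hDu : (∏ i ∈ Finset.range m,
      ((RatFunc.X : RatFunc ℚ) + m + ((k + 1 : ℕ) : RatFunc ℚ) - i + 1)) =
      rfac ((RatFunc.X : RatFunc ℚ) + k + 3) m := by
    unfold rfac
    calc (∏ i ∈ Finset.range m,
        ((RatFunc.X : RatFunc ℚ) + m + ((k + 1 : ℕ) : RatFunc ℚ) - i + 1))
        = ∏ i ∈ Finset.range m, ((RatFunc.X : RatFunc ℚ) + k + 3 + ((m - 1 - i : ℕ) : RatFunc ℚ)) := by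
          refine Finset.prod_congr rfl fun i hi => ?_
          simp only [Finset.mem_range] at hi
          rw [show m - 1 - i = m - (i + 1) by omega, Nat.cast_sub (by omega)]
          push_cast
          ring
      _ = ∏ i ∈ Finset.range m, ((RatFunc.X : RatFunc ℚ) + k + 3 + (i : RatFunc ℚ)) :=
          Finset.prod_range_reflect (fun i => (RatFunc.X : RatFunc ℚ) + k + 3 + (i : RatFunc ℚ)) m
  have hDv : (∏ i ∈ Finset.range m,
      ((RatFunc.X : RatFunc ℚ) + m + ((k + 1 : ℕ) : RatFunc ℚ) - i + 1 / 2)) =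
      ∏ i ∈ Finset.range m, ((RatFunc.X : RatFunc ℚ) + k + i + 2 + 1 / 2) := by
    calc (∏ i ∈ Finset.range m,
        ((RatFunc.X : RatFunc ℚ) + m + ((k + 1 : ℕ) : RatFunc ℚ) - i + 1 / 2))
        = ∏ i ∈ Finset.range m,
            ((RatFunc.X : RatFunc ℚ) + k + ((m - 1 - i : ℕ) : RatFunc ℚ) + 2 + 1 / 2) := by
          refine Finset.prod_congr rfl fun i hi => ?_
          simp only [Finset.mem_range] at hi
          rw [show m - 1 - i = m - (i + 1) by omega, Nat.cast_sub (by omega)]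
          push_cast
          ring
      _ = ∏ i ∈ Finset.range m, ((RatFunc.X : RatFunc ℚ) + k + i + 2 + 1 / 2) :=
          Finset.prod_range_reflect
            (fun i => (RatFunc.X : RatFunc ℚ) + k + (i : RatFunc ℚ) + 2 + 1 / 2) m
  rw [Finset.prod_div_distrib, hGnorm, hDu, hDv]
  have hF := Fmain m k
  have hqd : rfac ((RatFunc.X : RatFunc ℚ) + k + 1 + 1 / 2) m ≠ 0 :=
    rfac_ne_zero _ (k + 1 + 1/2) (by push_cast; ring) m
  have hWDne : (∏ i ∈ Finset.Icc 1 m, Lf (i + (k + 2))) ≠ 0 :=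
    Finset.prod_ne_zero_iff.2 fun i _ => Lf_ne _
  have hDvne : (∏ i ∈ Finset.range m, ((RatFunc.X : RatFunc ℚ) + k + i + 2 + 1 / 2)) ≠ 0 :=
    Finset.prod_ne_zero_iff.2 fun i _ => nzX _ (k + i + 2 + 1/2) (by push_cast; ring)
  have step : (rfac (2 * (RatFunc.X : RatFunc ℚ) + m + k + 3) (m + k + 1) *
        rfac ((RatFunc.X : RatFunc ℚ) + k + 3) m) /
        ((2 : RatFunc ℚ) ^ (m + k + 1) *
          ∏ i ∈ Finset.range m, ((RatFunc.X : RatFunc ℚ) + k + i + 2 + 1 / 2)) =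
      (rfac ((RatFunc.X : RatFunc ℚ) + k + 3) m *
        (∏ j ∈ Finset.Icc ((k + 4) / 2) (k + 1), ((RatFunc.X : RatFunc ℚ) + j)) *
        (∏ j ∈ Finset.Icc ((k + 3) / 2) (k + 1), ((RatFunc.X : RatFunc ℚ) + j + 1 / 2)) *
        (∏ i ∈ Finset.Icc 1 m, (Lf (2 * i + (2 * k + 1)) * Lf (2 * i + (2 * k + 2))))) /
        ((2 : RatFunc ℚ) ^ m *
          (rfac ((RatFunc.X : RatFunc ℚ) + k + 1 + 1 / 2) m *
            ∏ i ∈ Finset.Icc 1 m, Lf (i + (k + 2)))) := by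
    rw [div_eq_div_iff (mul_ne_zero (pow_ne_zero _ two_ne_zero) hDvne)
      (mul_ne_zero (pow_ne_zero _ two_ne_zero) (mul_ne_zero hqd hWDne))]
    linear_combination (-((2 : RatFunc ℚ) ^ m) * rfac ((RatFunc.X : RatFunc ℚ) + k + 3) m) * hF
  calc ((2 : RatFunc ℚ) ^ (m + (k + 1)))⁻¹ *
        rfac (2 * (RatFunc.X : RatFunc ℚ) + m + k + 3) (m + k + 1) *
        (rfac ((RatFunc.X : RatFunc ℚ) + k + 3) m /
          ∏ i ∈ Finset.range m, ((RatFunc.X : RatFunc ℚ) + k + i + 2 + 1 / 2))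
      = (rfac (2 * (RatFunc.X : RatFunc ℚ) + m + k + 3) (m + k + 1) *
          rfac ((RatFunc.X : RatFunc ℚ) + k + 3) m) /
          ((2 : RatFunc ℚ) ^ (m + k + 1) *
            ∏ i ∈ Finset.range m, ((RatFunc.X : RatFunc ℚ) + k + i + 2 + 1 / 2)) := by
        rw [show m + (k + 1) = m + k + 1 by omega]
        ring
    _ = (rfac ((RatFunc.X : RatFunc ℚ) + k + 3) m *
          (∏ j ∈ Finset.Icc ((k + 4) / 2) (k + 1), ((RatFunc.X : RatFunc ℚ) + j)) *
          (∏ j ∈ Finset.Icc ((k + 3) / 2) (k + 1), ((RatFunc.X : RatFunc ℚ) + j + 1 / 2)) *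
          (∏ i ∈ Finset.Icc 1 m, (Lf (2 * i + (2 * k + 1)) * Lf (2 * i + (2 * k + 2))))) /
          ((2 : RatFunc ℚ) ^ m *
            (rfac ((RatFunc.X : RatFunc ℚ) + k + 1 + 1 / 2) m *
              ∏ i ∈ Finset.Icc 1 m, Lf (i + (k + 2)))) := step
    _ = ((2 : RatFunc ℚ) ^ m)⁻¹ * rfac ((RatFunc.X : RatFunc ℚ) + k + 3) m *
          (∏ j ∈ Finset.Icc ((k + 4) / 2) (k + 1), ((RatFunc.X : RatFunc ℚ) + j)) *
          (∏ j ∈ Finset.Icc ((k + 3) / 2) (k + 1), ((RatFunc.X : RatFunc ℚ) + j + 1 / 2)) *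
          ((∏ i ∈ Finset.Icc 1 m, (Lf (2 * i + (2 * k + 1)) * Lf (2 * i + (2 * k + 2)))) /
            (rfac ((RatFunc.X : RatFunc ℚ) + k + 1 + 1 / 2) m *
              ∏ i ∈ Finset.Icc 1 m, Lf (i + (k + 2)))) := by
        ring

lemma hexp (m k : ℕ) : m * (k + 1) + m * (m - 1) / 2 = m + (m * k + m * (m - 1) / 2) := by
  rw [Nat.mul_succ]
  ac_rfl

set_option maxHeartbeats 1000000 in
lemma final (m k : ℕ) :
    Bpoly m (k + 1) (RatFunc.X : RatFunc ℚ) =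
      ((2 : RatFunc ℚ) ^ (m + (k + 1)))⁻¹ *
          rfac (2 * (RatFunc.X : RatFunc ℚ) + m + ((k + 1 : ℕ) : RatFunc ℚ) + 2) (m + (k + 1)) *
          (∏ i ∈ Finset.range m,
            (((RatFunc.X : RatFunc ℚ) + m + ((k + 1 : ℕ) : RatFunc ℚ) - i + 1) /
              ((RatFunc.X : RatFunc ℚ) + m + ((k + 1 : ℕ) : RatFunc ℚ) - i + 1 / 2))) *
        Bpoly m k (RatFunc.X : RatFunc ℚ) := by
  rw [hRlem m k]
  unfold Bpoly
  rw [tentInt_step k, tentHalf_step k]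
  rw [Finset.prod_Icc_succ_top (by omega : 1 ≤ k + 1)]
  have hWD : (∏ i ∈ Finset.Icc 1 m, Lf (i + (k + 2))) ≠ 0 :=
    Finset.prod_ne_zero_iff.2 fun i _ => Lf_ne _
  have hWnorm : (∏ i ∈ Finset.Icc 1 m,
      rfac (2 * (RatFunc.X : RatFunc ℚ) + ((k + 1 : ℕ) : RatFunc ℚ) + i + 2) (k + 1 + i - 1)) =
      ∏ i ∈ Finset.Icc 1 m, rfac (2 * (RatFunc.X : RatFunc ℚ) + k + i + 3) (k + i) := by
    refine Finset.prod_congr rfl fun i _ => ?_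
    rw [show (2 * (RatFunc.X : RatFunc ℚ) + ((k + 1 : ℕ) : RatFunc ℚ) + i + 2) =
        2 * (RatFunc.X : RatFunc ℚ) + k + i + 3 by push_cast; ring,
      show k + 1 + i - 1 = k + i by omega]
  have hWdiv : (∏ i ∈ Finset.Icc 1 m, rfac (2 * (RatFunc.X : RatFunc ℚ) + k + i + 3) (k + i)) =
      (∏ i ∈ Finset.Icc 1 m, rfac (2 * (RatFunc.X : RatFunc ℚ) + k + i + 2) (k + i - 1)) *
        (∏ i ∈ Finset.Icc 1 m, (Lf (2 * i + (2 * k + 1)) * Lf (2 * i + (2 * k + 2)))) /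
        (∏ i ∈ Finset.Icc 1 m, Lf (i + (k + 2))) := by
    rw [eq_div_iff hWD]
    exact W_step m k
  rw [hWnorm, hWdiv]
  rw [show ((RatFunc.X : RatFunc ℚ) + ((k + 1 : ℕ) : RatFunc ℚ) + 1) =
      (RatFunc.X : RatFunc ℚ) + k + 2 by push_cast; ring]
  rw [show ((RatFunc.X : RatFunc ℚ) + ((k + 1 : ℕ) : RatFunc ℚ) + 2) =
      (RatFunc.X : RatFunc ℚ) + k + 3 by push_cast; ring]
  rw [show ((RatFunc.X : RatFunc ℚ) + ((k + 1 : ℕ) : RatFunc ℚ) + 1 / 2) =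
      (RatFunc.X : RatFunc ℚ) + k + 1 + 1 / 2 by push_cast; ring]
  rw [show ((RatFunc.X : RatFunc ℚ) + ((k + 1 : ℕ) : RatFunc ℚ)) =
      (RatFunc.X : RatFunc ℚ) + k + 1 by push_cast; ring]
  rw [hexp m k, pow_add, mul_inv]
  ring

end BAux

/-- Identity (5.6): for `n ≥ 1`,
`B_{m,n}(x)/B_{m,n-1}(x) = 2^{-(m+n)} (2x+m+n+2)_{m+n} ∏_{i=0}^{m-1} (x+m+n-i+1)/(x+m+n-i+1/2)`,
as rational functions in `x`. -/
theorem B_ratio_n (m n : ℕ) (hn : 1 ≤ n) :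
    Bpoly m n (RatFunc.X : RatFunc ℚ) / Bpoly m (n - 1) (RatFunc.X : RatFunc ℚ) =
      ((2 : RatFunc ℚ) ^ (m + n))⁻¹ *
        rfac (2 * (RatFunc.X : RatFunc ℚ) + m + n + 2) (m + n) *
        ∏ i ∈ Finset.range m,
          ((RatFunc.X : RatFunc ℚ) + m + n - i + 1) /
            ((RatFunc.X : RatFunc ℚ) + m + n - i + 1 / 2) := by
  obtain ⟨k, rfl⟩ : ∃ k, n = k + 1 := ⟨n - 1, by omega⟩
  rw [show k + 1 - 1 = k from rfl]
  rw [div_eq_iff (BAux.Bpoly_ne_zero m k)]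
  exact BAux.final m k
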